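/- Let A > 0, δ > 0, let k₀ ≥ 1 be an integer, and let (M_k)_{k ≥ k₀} be a sequence of strictly positive real numbers satisfying M_k = M_{k−1}·((k − 1 + δ)·A)/((k + δ)·A + 1) for all integers k > k₀. Then there exists a constant L > 0 such that lim_{k→∞} M_k·k^(1 + 1/A) = L; in particular M_k is asymptotically proportional to k^(−(1 + 1/A)). -/

import Mathlib

open Filter Finset

/-- Lower bound `s - s² ≤ log(1+s)` for `s ≥ 0`. -/
lemma aux_log_lb {s : ℝ} (hs : 0 ≤ s) : s - s ^ 2 ≤ Real.log (1 + s) := by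
  have hpos : (0 : ℝ) < 1 + s := by linarith
  have h := Real.one_sub_inv_le_log_of_pos hpos
  have h2 : s - s ^ 2 ≤ 1 - (1 + s)⁻¹ := by
    have : 1 - (1 + s)⁻¹ = s / (1 + s) := by field_simp; ring
    rw [this, le_div_iff₀ hpos]; nlinarith
  linarith

/-- Upper bound `log(1+s) ≤ s` for `s ≥ 0`. -/
lemma aux_log_ub {s : ℝ} (hs : 0 ≤ s) : Real.log (1 + s) ≤ s := by
  have hpos : (0 : ℝ) < 1 + s := by linarith
  have := Real.log_le_sub_one_of_pos hpos
  linarith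

/-- Quantitative bound on the log of the one-step ratio. -/
lemma aux_bound (α δ x : ℝ) (hα : 0 < α) (hδ : 0 < δ) (hx : 1 ≤ x) :
    |α * Real.log (1 + 1 / x) - Real.log (1 + α / (x + δ))| ≤
      (α * δ + α ^ 2 + α) / x ^ 2 := by
  have hx0 : (0 : ℝ) < x := by linarith
  have hxd : (0 : ℝ) < x + δ := by linarith
  have ht : (0 : ℝ) ≤ 1 / x := by positivity
  have hs : (0 : ℝ) ≤ α / (x + δ) := by positivity
  have hL1u := aux_log_ub ht
  have hL1l := aux_log_lb ht
  have hL2u := aux_log_ub hs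
  have hL2l := aux_log_lb hs
  have h7 : α * Real.log (1 + 1 / x) ≤ α / x := by
    have := mul_le_mul_of_nonneg_left hL1u hα.le
    have e : α * (1 / x) = α / x := by ring
    linarith [e ▸ this]
  have h7' : α / x - α / x ^ 2 ≤ α * Real.log (1 + 1 / x) := by
    have h := mul_le_mul_of_nonneg_left hL1l hα.le
    have e : α * (1 / x - (1 / x) ^ 2) = α / x - α / x ^ 2 := by
      field_simp
    linarith [e ▸ h]
  have h3 : α / (x + δ) ≤ α / x := by
    apply div_le_div_of_nonneg_left hα.le hx0; linarith
  have h5 : α / x - α / (x + δ) ≤ α * δ / x ^ 2 := by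
    have he : α / x - α / (x + δ) = α * δ / (x * (x + δ)) := by
      field_simp; ring
    rw [he]
    apply div_le_div_of_nonneg_left (by positivity) (by positivity)
    nlinarith
  have h6 : (α / (x + δ)) ^ 2 ≤ α ^ 2 / x ^ 2 := by
    rw [div_pow]
    apply div_le_div_of_nonneg_left (by positivity) (by positivity)
    nlinarith
  have h9 : (0 : ℝ) ≤ α / x ^ 2 := by positivity
  have h10 : α * δ / x ^ 2 + α ^ 2 / x ^ 2 + α / x ^ 2 =
      (α * δ + α ^ 2 + α) / x ^ 2 := by ring
  rw [abs_le]
  constructor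
  · have hC : α / x ^ 2 ≤ (α * δ + α ^ 2 + α) / x ^ 2 := by
      apply div_le_div_of_nonneg_right ?_ (by positivity)
      nlinarith
    linarith
  · linarith

/-- The one-step identity: multiplying by the recurrence ratio and the power
`(x+1)^α / x^α` equals multiplying by `exp` of the log-ratio. -/
lemma aux_step (A δ : ℝ) (hA : 0 < A) (hδ : 0 < δ) (x : ℝ) (hx : 1 ≤ x)
    (m m' : ℝ)
    (hm : m' = m * ((x + 1 - 1 + δ) * A) / ((x + 1 + δ) * A + 1)) :
    m' * (x + 1) ^ (1 + 1 / A) = m * x ^ (1 + 1 / A) *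
      Real.exp ((1 + 1 / A) * Real.log (1 + 1 / x) -
        Real.log (1 + (1 + 1 / A) / (x + δ))) := by
  have hα : (0 : ℝ) < 1 + 1 / A := by positivity
  have hx0 : (0 : ℝ) < x := by linarith
  have hxd : (0 : ℝ) < x + δ := by linarith
  have hden : (0 : ℝ) < 1 + (1 + 1 / A) / (x + δ) := by positivity
  have hnum : (0 : ℝ) < 1 + 1 / x := by positivity
  have hexp : Real.exp ((1 + 1 / A) * Real.log (1 + 1 / x) -
      Real.log (1 + (1 + 1 / A) / (x + δ)))
      = (1 + 1 / x) ^ (1 + 1 / A) * (1 + (1 + 1 / A) / (x + δ))⁻¹ := by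
    rw [Real.exp_sub, Real.exp_log hden,
      Real.rpow_def_of_pos hnum, div_eq_mul_inv, mul_comm (1 + 1 / A)]
  have hrpow : (x + 1) ^ (1 + 1 / A) = x ^ (1 + 1 / A) * (1 + 1 / x) ^ (1 + 1 / A) := by
    rw [← Real.mul_rpow hx0.le hnum.le]
    congr 1
    field_simp
  have hratio : ((x + 1 - 1 + δ) * A) / ((x + 1 + δ) * A + 1) =
      (1 + (1 + 1 / A) / (x + δ))⁻¹ := by
    have hAne : A ≠ 0 := ne_of_gt hA
    have hd1 : (x + 1 + δ) * A + 1 > 0 := by positivity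
    field_simp
    ring
  rw [hm, hexp, hrpow, mul_div_assoc, hratio]
  ring

/-- Any positive solution of the equilibrium recurrence
`M_k = M_{k-1} · ((k - 1 + δ)·A)/((k + δ)·A + 1)` decays as a power law with
exponent `1 + 1/A`: the sequence `M_k · k^(1 + 1/A)` converges to a positive limit. -/
theorem recurrence_power_law (A δ : ℝ) (hA : 0 < A) (hδ : 0 < δ)
    (k₀ : ℕ) (hk₀ : 1 ≤ k₀) (M : ℕ → ℝ)
    (hpos : ∀ k : ℕ, k₀ ≤ k → 0 < M k)
    (hrec : ∀ k : ℕ, k₀ < k →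
      M k = M (k - 1) * (((k : ℝ) - 1 + δ) * A) / (((k : ℝ) + δ) * A + 1)) :
    ∃ L : ℝ, 0 < L ∧
      Filter.Tendsto (fun k : ℕ => M k * (k : ℝ) ^ (1 + 1 / A)) Filter.atTop (nhds L) := by
  have hα : (0 : ℝ) < 1 + 1 / A := by positivity
  have hk₀R : (1 : ℝ) ≤ (k₀ : ℝ) := by exact_mod_cast hk₀
  -- the log-ratio sequence
  set b : ℕ → ℝ := fun n =>
    (1 + 1 / A) * Real.log (1 + 1 / ((k₀ : ℝ) + n)) -
      Real.log (1 + (1 + 1 / A) / ((k₀ : ℝ) + n + δ)) with hb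
  -- one-step relation
  have hstep : ∀ n : ℕ,
      M (k₀ + n + 1) * ((k₀ + n + 1 : ℕ) : ℝ) ^ (1 + 1 / A) =
        M (k₀ + n) * ((k₀ + n : ℕ) : ℝ) ^ (1 + 1 / A) * Real.exp (b n) := by
    intro n
    have hx1 : (1 : ℝ) ≤ (k₀ : ℝ) + n := by
      linarith [Nat.cast_nonneg (α := ℝ) n]
    have hk : k₀ < k₀ + n + 1 := by omega
    have hMk := hrec _ hk
    have hsub : k₀ + n + 1 - 1 = k₀ + n := by omega
    rw [hsub] at hMk
    have hcast1 : ((k₀ + n + 1 : ℕ) : ℝ) = ((k₀ : ℝ) + n) + 1 := by push_cast; ring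
    have hcast2 : ((k₀ + n : ℕ) : ℝ) = (k₀ : ℝ) + n := by push_cast; ring
    rw [hcast1] at hMk
    rw [hcast1, hcast2]
    exact aux_step A δ hA hδ ((k₀ : ℝ) + n) hx1 (M (k₀ + n)) (M (k₀ + n + 1)) hMk
  -- closed form via telescoping
  have hprod : ∀ n : ℕ,
      M (k₀ + n) * ((k₀ + n : ℕ) : ℝ) ^ (1 + 1 / A) =
        M k₀ * ((k₀ : ℕ) : ℝ) ^ (1 + 1 / A) *
          Real.exp (∑ i ∈ Finset.range n, b i) := by
    intro n
    induction n with
    | zero => simp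
    | succ n ih =>
      have : k₀ + (n + 1) = k₀ + n + 1 := by omega
      rw [this, hstep n, ih, Finset.sum_range_succ, Real.exp_add]
      ring
  -- summability of b
  have hbound : ∀ n : ℕ,
      |b n| ≤ ((1 + 1 / A) * δ + (1 + 1 / A) ^ 2 + (1 + 1 / A)) / ((n : ℝ) + 1) ^ 2 := by
    intro n
    have hx1 : (1 : ℝ) ≤ (k₀ : ℝ) + n := by
      linarith [Nat.cast_nonneg (α := ℝ) n]
    have h1 := aux_bound (1 + 1 / A) δ ((k₀ : ℝ) + n) hα hδ hx1
    have h2 : ((1 + 1 / A) * δ + (1 + 1 / A) ^ 2 + (1 + 1 / A)) / ((k₀ : ℝ) + n) ^ 2 ≤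
        ((1 + 1 / A) * δ + (1 + 1 / A) ^ 2 + (1 + 1 / A)) / ((n : ℝ) + 1) ^ 2 := by
      apply div_le_div_of_nonneg_left (by positivity) (by positivity)
      have : (n : ℝ) + 1 ≤ (k₀ : ℝ) + n := by linarith
      nlinarith [Nat.cast_nonneg (α := ℝ) n]
    exact le_trans h1 h2
  have hsum0 : Summable (fun n : ℕ =>
      ((1 + 1 / A) * δ + (1 + 1 / A) ^ 2 + (1 + 1 / A)) / ((n : ℝ) + 1) ^ 2) := by
    have h1 : Summable (fun n : ℕ => 1 / ((n : ℝ) ^ 2)) :=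
      Real.summable_one_div_nat_pow.mpr one_lt_two
    have h2 : Summable (fun n : ℕ => 1 / (((n + 1 : ℕ) : ℝ) ^ 2)) :=
      (summable_nat_add_iff (f := fun n : ℕ => 1 / ((n : ℝ) ^ 2)) 1).mpr h1
    have h3 : Summable (fun n : ℕ => 1 / (((n : ℝ) + 1) ^ 2)) := by
      convert h2 using 2 with n
      push_cast
      ring
    simpa [div_eq_mul_inv] using
      h3.mul_left ((1 + 1 / A) * δ + (1 + 1 / A) ^ 2 + (1 + 1 / A))
  have hBsum : Summable b :=
    Summable.of_abs (Summable.of_nonneg_of_le (fun n => abs_nonneg _) hbound hsum0)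
  obtain ⟨S, hS⟩ := hBsum
  have hTend : Tendsto (fun n => ∑ i ∈ Finset.range n, b i) atTop (nhds S) :=
    hS.tendsto_sum_nat
  -- the limit
  have hk₀pos : (0 : ℝ) < (k₀ : ℝ) := by linarith
  have hfpos : 0 < M k₀ * ((k₀ : ℕ) : ℝ) ^ (1 + 1 / A) :=
    mul_pos (hpos k₀ le_rfl) (Real.rpow_pos_of_pos hk₀pos _)
  refine ⟨M k₀ * ((k₀ : ℕ) : ℝ) ^ (1 + 1 / A) * Real.exp S, by positivity, ?_⟩
  have hshift : Tendsto (fun n => M (k₀ + n) * ((k₀ + n : ℕ) : ℝ) ^ (1 + 1 / A)) atTop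
      (nhds (M k₀ * ((k₀ : ℕ) : ℝ) ^ (1 + 1 / A) * Real.exp S)) := by
    have heq : (fun n => M (k₀ + n) * ((k₀ + n : ℕ) : ℝ) ^ (1 + 1 / A)) =
        fun n => M k₀ * ((k₀ : ℕ) : ℝ) ^ (1 + 1 / A) *
          Real.exp (∑ i ∈ Finset.range n, b i) := funext hprod
    rw [heq]
    exact Tendsto.const_mul _ ((Real.continuous_exp.tendsto S).comp hTend)
  rw [← tendsto_add_atTop_iff_nat k₀]
  have heq2 : (fun n => (fun k : ℕ => M k * (k : ℝ) ^ (1 + 1 / A)) (n + k₀)) =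
      fun n => M (k₀ + n) * ((k₀ + n : ℕ) : ℝ) ^ (1 + 1 / A) := by
    funext n
    simp only [Nat.add_comm n k₀]
  rw [heq2]
  exact hshift
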